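/- For every order pattern π of length N+1 (i.e., every permutation of {0,1,...,N}), there exists a point ω in the one-sided full shift space on N ≥ 2 symbols such that the orbit segment ω, Σω, Σ²ω, ..., Σ^N ω realizes π, i.e., Σ^{π₀}ω < Σ^{π₁}ω < ... < Σ^{π_N}ω in the lexicographic order. -/

import Mathlib

/-- The one-sided shift map on sequences over `Fin N`. -/
def oshift {N : ℕ} (ω : ℕ → Fin N) : ℕ → Fin N := fun n => ω (n + 1)

/-- Lexicographic strict order on one-sided sequences. -/
def lexLt {N : ℕ} (ω ω' : ℕ → Fin N) : Prop :=
  ∃ n, (∀ k, k < n → ω k = ω' k) ∧ ω n < ω' n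

namespace ShiftRealAux

open Fin.NatCast

lemma oshift_iterate {N : ℕ} (a : ℕ) : ∀ (ω : ℕ → Fin N) (n : ℕ),
    oshift^[a] ω n = ω (n + a) := by
  induction a with
  | zero => intro ω n; simp
  | succ a ih =>
    intro ω n
    rw [Function.iterate_succ_apply, ih (oshift ω) n]
    rfl

variable {N : ℕ} (π : Equiv.Perm (Fin (N + 1)))

/-- rank of a position. -/
def rk (p : Fin (N + 1)) : ℕ := (π.symm p : ℕ)

lemma rk_lt (p : Fin (N + 1)) : rk π p < N + 1 := (π.symm p).isLt

lemma rk_inj {p q : Fin (N + 1)} (h : rk π p = rk π q) : p = q := by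
  have h2 : π.symm p = π.symm q := Fin.val_injective h
  simpa using congrArg π h2

lemma apply_cast_rk (p : Fin (N + 1)) : π ↑(rk π p) = p := by
  rw [rk, Fin.cast_val_eq_self, Equiv.apply_symm_apply]

/-- descent indicator. -/
def ee (m : ℕ) : ℕ :=
  if rk π (π ↑(m + 1) + 1) < rk π (π ↑m + 1) then 1 else 0

/-- digit at a position. -/
def dd (p : Fin (N + 1)) : ℕ := ∑ m ∈ Finset.range (rk π p), ee π m

lemma exists_ee_zero (hN : 2 ≤ N) : ∃ m, m < N ∧ ee π m = 0 := by
  by_contra hc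
  push_neg at hc
  set g : ℕ → ℕ := fun m => rk π (π ↑m + 1) with hgdef
  have hdesc : ∀ m, m < N → g (m + 1) < g m := by
    intro m hm
    by_contra hlt
    exact hc m hm (if_neg hlt)
  have h2 : ∀ m, m ≤ N → g m + m ≤ g 0 := by
    intro m hm
    induction m with
    | zero => simp
    | succ m ih =>
      have ha := hdesc m (by omega)
      have hb := ih (by omega)
      omega
  have h1 : ∀ t, t ≤ N → t ≤ g (N - t) := by
    intro t ht
    induction t with
    | zero => omega
    | succ t ih =>
      have hstep := hdesc (N - t - 1) (by omega)
      have hrw : N - t - 1 + 1 = N - t := by omega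
      rw [hrw] at hstep
      have hb := ih (by omega)
      rw [show N - (t + 1) = N - t - 1 from by omega]
      omega
  have hg0 : g 0 < N + 1 := rk_lt π _
  have hval : ∀ m, m ≤ N → g m = N - m := by
    intro m hm
    have ha := h1 (N - m) (by omega)
    have hrw : N - (N - m) = m := by omega
    rw [hrw] at ha
    have hb := h2 m hm
    omega
  have heq : ∀ m, m ≤ N → π ↑m + 1 = π ↑(N - m) := by
    intro m hm
    have h := hval m hm
    have h3 : π ↑(rk π (π ↑m + 1)) = π ↑m + 1 := apply_cast_rk π _
    rw [show rk π (π (↑m) + 1) = N - m from h] at h3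
    exact h3.symm
  have e1 := heq 0 (by omega)
  have e2 := heq N le_rfl
  rw [show N - N = 0 from by omega] at e2
  rw [show N - 0 = N from by omega] at e1
  have h3 : π ↑(0:ℕ) + (1 + 1) = π ↑(0:ℕ) := by
    rw [← add_assoc, e1, e2]
  have h4 : (1 + 1 : Fin (N + 1)) = 0 := by
    have := h3
    nth_rewrite 2 [← add_zero (π ↑(0:ℕ))] at this
    exact add_left_cancel this
  have h5 := congrArg Fin.val h4
  rw [Fin.val_add, Fin.val_zero, Fin.val_one'] at h5
  rw [Nat.mod_eq_of_lt (by omega : 1 < N + 1)] at h5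
  rw [Nat.mod_eq_of_lt (by omega : 1 + 1 < N + 1)] at h5
  omega

lemma dd_mono {p q : Fin (N + 1)} (h : rk π p ≤ rk π q) : dd π p ≤ dd π q :=
  Finset.sum_le_sum_of_subset (Finset.range_subset_range.mpr h)

lemma dd_lt (hN : 2 ≤ N) (p : Fin (N + 1)) : dd π p < N := by
  obtain ⟨m0, hm0, hz⟩ := exists_ee_zero π hN
  have h1 : dd π p ≤ ∑ m ∈ Finset.range N, ee π m := by
    apply Finset.sum_le_sum_of_subset
    apply Finset.range_subset_range.mpr
    have := rk_lt π p
    omega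
  have h2 : ∑ m ∈ Finset.range N, ee π m < ∑ m ∈ Finset.range N, 1 := by
    apply Finset.sum_lt_sum
    · intro i _
      unfold ee
      split <;> omega
    · exact ⟨m0, Finset.mem_range.mpr hm0, by omega⟩
  simpa using lt_of_le_of_lt h1 h2

lemma step (p q : Fin (N + 1)) (hd : dd π p = dd π q) (hr : rk π p < rk π q) :
    rk π (p + 1) < rk π (q + 1) := by
  have hz : ∀ m ∈ Finset.Ico (rk π p) (rk π q), ee π m = 0 := by
    have hsplit : ∑ m ∈ Finset.range (rk π p), ee π m
        + ∑ m ∈ Finset.Ico (rk π p) (rk π q), ee π m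
        = ∑ m ∈ Finset.range (rk π q), ee π m := by
      rw [Finset.range_eq_Ico, Finset.range_eq_Ico]
      exact Finset.sum_Ico_consecutive (ee π) (Nat.zero_le _) (le_of_lt hr)
    have hzero : ∑ m ∈ Finset.Ico (rk π p) (rk π q), ee π m = 0 := by
      unfold dd at hd; omega
    intro m hm
    exact (Finset.sum_eq_zero_iff).mp hzero m hm
  have hstep : ∀ m, rk π p ≤ m → m < rk π q →
      rk π (π ↑m + 1) < rk π (π ↑(m + 1) + 1) := by
    intro m h1 h2
    have he : ee π m = 0 := hz m (Finset.mem_Ico.mpr ⟨h1, h2⟩)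
    have hle : rk π (π ↑m + 1) ≤ rk π (π ↑(m + 1) + 1) := by
      unfold ee at he
      split at he
      · exact absurd he (by omega)
      · next hnl => exact le_of_not_gt hnl
    have hne : π ↑m + 1 ≠ π ↑(m + 1) + 1 := by
      intro hcontra
      have hcc : (↑m : Fin (N + 1)) = ↑(m + 1) := π.injective (add_right_cancel hcontra)
      have hv := congrArg Fin.val hcc
      rw [Fin.val_natCast, Fin.val_natCast] at hv
      have hq := rk_lt π q
      rw [Nat.mod_eq_of_lt (by omega : m < N + 1)] at hv
      rw [Nat.mod_eq_of_lt (by omega : m + 1 < N + 1)] at hv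
      omega
    exact lt_of_le_of_ne hle (fun hh => hne (rk_inj π hh))
  have chain : ∀ t, rk π p + t ≤ rk π q → 0 < t →
      rk π (π ↑(rk π p) + 1) < rk π (π ↑(rk π p + t) + 1) := by
    intro t
    induction t with
    | zero => intro _ h0; omega
    | succ t ih =>
      intro hle _
      rcases Nat.eq_zero_or_pos t with h0 | hpos
      · subst h0
        simpa using hstep (rk π p) le_rfl (by omega)
      · have h1 := ih (by omega) hpos
        have h2 := hstep (rk π p + t) (by omega) (by omega)
        exact lt_trans h1 h2
  have hfin := chain (rk π q - rk π p) (by omega) (by omega)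
  rw [Nat.add_sub_cancel' (le_of_lt hr)] at hfin
  rwa [apply_cast_rk, apply_cast_rk] at hfin

set_option maxHeartbeats 1000000 in
lemma rk_add_lt (p q : Fin (N + 1)) (hr : rk π p < rk π q) :
    ∀ k : ℕ, (∀ j, j < k → dd π (p + ↑j) = dd π (q + ↑j)) →
      rk π (p + ↑k) < rk π (q + ↑k) := by
  intro k
  induction k with
  | zero => intro _; simpa using hr
  | succ k ih =>
    intro heq
    have h1 := ih (fun j hj => heq j (by omega))
    have h2 := step π (p + ↑k) (q + ↑k) (heq k (by omega)) h1
    have hc : ((k + 1 : ℕ) : Fin (N + 1)) = (↑k : Fin (N + 1)) + 1 := by push_cast; ring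
    rw [hc, ← add_assoc, ← add_assoc]
    exact h2

lemma exists_dd_ne (p q : Fin (N + 1)) (hr : rk π p < rk π q) :
    ∃ k : ℕ, dd π (p + ↑k) ≠ dd π (q + ↑k) := by
  by_contra hc
  push_neg at hc
  have inv : ∀ k : ℕ, rk π (p + ↑k) < rk π (q + ↑k) :=
    fun k => rk_add_lt π p q hr k (fun j _ => hc j)
  have hsum : ∀ x : Fin (N + 1),
      (∑ k : Fin (N + 1), rk π (x + k)) = ∑ k : Fin (N + 1), rk π k := by
    intro x
    exact Fintype.sum_equiv (Equiv.addLeft x) _ _ (fun k => rfl)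
  have hlt : (∑ k : Fin (N + 1), rk π (p + k)) < ∑ k : Fin (N + 1), rk π (q + k) := by
    apply Finset.sum_lt_sum_of_nonempty Finset.univ_nonempty
    intro k _
    have hk := inv k.val
    rwa [Fin.cast_val_eq_self] at hk
  rw [hsum, hsum] at hlt
  exact lt_irrefl _ hlt

lemma main (hN : 2 ≤ N) (p q : Fin (N + 1)) (hr : rk π p < rk π q) :
    ∃ k : ℕ, (∀ j, j < k → dd π (p + ↑j) = dd π (q + ↑j)) ∧
      dd π (p + ↑k) < dd π (q + ↑k) := by
  classical
  have hex := exists_dd_ne π p q hr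
  refine ⟨Nat.find hex, fun j hj => ?_, ?_⟩
  · exact not_ne_iff.mp (Nat.find_min hex hj)
  · have hne := Nat.find_spec hex
    have hrk := rk_add_lt π p q hr (Nat.find hex)
      (fun j hj => not_ne_iff.mp (Nat.find_min hex hj))
    exact lt_of_le_of_ne (dd_mono π (le_of_lt hrk)) hne

end ShiftRealAux

open ShiftRealAux Fin.NatCast in
/-- Every order pattern of length `N+1` is realized by some point of the
one-sided full shift on `N ≥ 2` symbols. -/
theorem shift_realizes_length_succ (N : ℕ) (hN : 2 ≤ N)
    (π : Equiv.Perm (Fin (N + 1))) :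
    ∃ ω : ℕ → Fin N, ∀ i j : Fin (N + 1), i < j →
      lexLt (oshift^[(π i : ℕ)] ω) (oshift^[(π j : ℕ)] ω) := by
  classical
  refine ⟨fun n => ⟨dd π ↑n, dd_lt π hN _⟩, ?_⟩
  intro i j hij
  have hr : rk π (π i) < rk π (π j) := by
    unfold rk
    rw [Equiv.symm_apply_apply, Equiv.symm_apply_apply]
    exact hij
  obtain ⟨k, hpre, hlt⟩ := main π hN (π i) (π j) hr
  have ecast : ∀ (x : Fin (N + 1)) (m : ℕ),
      ((m + (x : ℕ) : ℕ) : Fin (N + 1)) = x + (m : Fin (N + 1)) := by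
    intro x m
    rw [Nat.cast_add, Fin.cast_val_eq_self]
    exact add_comm _ _
  refine ⟨k, ?_, ?_⟩
  · intro m hm
    rw [oshift_iterate, oshift_iterate]
    apply Fin.ext
    show dd π ↑(m + (π i : ℕ)) = dd π ↑(m + (π j : ℕ))
    rw [ecast, ecast]
    exact hpre m hm
  · rw [oshift_iterate, oshift_iterate]
    apply Fin.mk_lt_mk.mpr
    show dd π ↑(k + (π i : ℕ)) < dd π ↑(k + (π j : ℕ))
    rw [ecast, ecast]
    exact hlt
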